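/- arXiv:2309.12025 — 4 statements merged into one kernel-verified Lean document; each statement's English description precedes it below -/
import Mathlib

section
/- Let f be a nonnegative k-submodular function with f(0) = 0, let (e_1,i_1),…,(e_t,i_t) be an LAA run, and let o be any k-set. Then for every j with 0 ≤ j ≤ t, f(o) − f(o^j) ≤ 2·f(x^j). -/
/-- The meet `x ⊓ y` of two `k`-sets, with components `Xᵢ ∩ Yᵢ`. -/
def sqcap {V : Type*} (x y : V → ℕ) : V → ℕ :=
  fun e => if x e = y e then x e else 0

/-- The join `x ⊔ y` of two `k`-sets, with components
`Zᵢ = (Xᵢ ∪ Yᵢ) \ ⋃_{j ≠ i} (Xⱼ ∪ Yⱼ)`. -/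
def sqcup {V : Type*} (x y : V → ℕ) : V → ℕ :=
  fun e =>
    if x e = 0 then y e
    else if y e = 0 then x e
    else if x e = y e then x e else 0

/-- A `k`-set: every element gets a position in `{0, 1, …, k}`
(`0` meaning unselected). -/
def IsKSet {V : Type*} (k : ℕ) (x : V → ℕ) : Prop := ∀ e, x e ≤ k

/-- `x ⊑ y`: every component of `x` is contained in the corresponding
component of `y`. -/
def KLE {V : Type*} (x y : V → ℕ) : Prop := ∀ e, x e ≠ 0 → y e = x e

/-- The singleton `k`-set `(e, i)`. -/
def singl {V : Type*} [DecidableEq V] (e : V) (i : ℕ) : V → ℕ :=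
  fun e' => if e' = e then i else 0

/-- `k`-submodularity: `f x + f y ≥ f (x ⊓ y) + f (x ⊔ y)` for all `k`-sets. -/
def KSubmodular {V : Type*} (k : ℕ) (f : (V → ℕ) → ℝ) : Prop :=
  ∀ x y : V → ℕ, IsKSet k x → IsKSet k y →
    f x + f y ≥ f (sqcap x y) + f (sqcup x y)

/-- The marginal gain `Δ_{(e,i)} f(x) = f (x ⊔ (e,i)) - f x`. -/
def marg {V : Type*} [DecidableEq V] (f : (V → ℕ) → ℝ) (e : V) (i : ℕ)
    (x : V → ℕ) : ℝ :=
  f (sqcup x (singl e i)) - f x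

/-- The cost of a `k`-set: the total cost of its support. -/
noncomputable def cost {V : Type*} [Fintype V] (c : V → ℝ) (x : V → ℕ) : ℝ :=
  ∑ e ∈ Finset.univ.filter (fun e => x e ≠ 0), c e

lemma isKSet_sqcup {V : Type*} {k : ℕ} {x y : V → ℕ} (hx : IsKSet k x) (hy : IsKSet k y) :
    IsKSet k (sqcup x y) := by
  intro e
  unfold sqcup
  split_ifs
  · exact hy e
  · exact hx e
  · exact hx e
  · exact Nat.zero_le k

lemma isKSet_singl {V : Type*} [DecidableEq V] {k : ℕ} (a : V) {i : ℕ} (hik : i ≤ k) :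
    IsKSet k (singl a i) := by
  intro v
  unfold singl
  split_ifs
  · exact hik
  · exact Nat.zero_le k

lemma pairwise_mono {V : Type*} [DecidableEq V] {k : ℕ} {f : (V → ℕ) → ℝ}
    (hsub : KSubmodular k f) {x : V → ℕ} (hx : IsKSet k x) {a : V} (ha : x a = 0)
    {i l : ℕ} (hi1 : 1 ≤ i) (hik : i ≤ k) (hl1 : 1 ≤ l) (hlk : l ≤ k) (hil : i ≠ l) :
    0 ≤ marg f a i x + marg f a l x := by
  have h1 : IsKSet k (sqcup x (singl a i)) := isKSet_sqcup hx (isKSet_singl a hik)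
  have h2 : IsKSet k (sqcup x (singl a l)) := isKSet_sqcup hx (isKSet_singl a hlk)
  have key := hsub _ _ h1 h2
  have hcap : sqcap (sqcup x (singl a i)) (sqcup x (singl a l)) = x := by
    funext v
    by_cases hv : v = a
    · subst hv
      simp only [sqcap, sqcup, singl, if_pos rfl, ha, if_true]
      split_ifs <;> omega
    · simp only [sqcap, sqcup, singl, if_neg hv]
      split_ifs <;> omega
  have hcup : sqcup (sqcup x (singl a i)) (sqcup x (singl a l)) = x := by
    funext v
    by_cases hv : v = a
    · subst hv
      simp only [sqcup, singl, if_pos rfl, ha, if_true]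
      split_ifs <;> omega
    · simp only [sqcup, singl, if_neg hv]
      split_ifs <;> omega
  rw [hcap, hcup] at key
  unfold marg
  linarith

lemma orthant {V : Type*} [DecidableEq V] {k : ℕ} {f : (V → ℕ) → ℝ}
    (hsub : KSubmodular k f) {x y : V → ℕ} (hx : IsKSet k x) (hy : IsKSet k y)
    (hxy : KLE x y) {a : V} (hay : y a = 0) {i : ℕ} (hi1 : 1 ≤ i) (hik : i ≤ k) :
    marg f a i y ≤ marg f a i x := by
  have hxa : x a = 0 := by
    by_contra h
    have := hxy a h
    omega
  have h1 : IsKSet k (sqcup x (singl a i)) := isKSet_sqcup hx (isKSet_singl a hik)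
  have key := hsub _ _ h1 hy
  have hcap : sqcap (sqcup x (singl a i)) y = x := by
    funext v
    by_cases hv : v = a
    · subst hv
      simp only [sqcap, sqcup, singl, if_pos rfl, hxa, hay, if_true]
      split_ifs <;> omega
    · by_cases hxv : x v = 0
      · simp only [sqcap, sqcup, singl, if_neg hv, hxv]
        split_ifs <;> omega
      · have := hxy v hxv
        simp only [sqcap, sqcup, singl, if_neg hv, this]
        split_ifs <;> omega
  have hcup : sqcup (sqcup x (singl a i)) y = sqcup y (singl a i) := by
    funext v
    by_cases hv : v = a
    · subst hv
      simp only [sqcup, singl, if_pos rfl, hxa, hay, if_true]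
      split_ifs <;> omega
    · by_cases hxv : x v = 0
      · simp only [sqcup, singl, if_neg hv, hxv]
        split_ifs <;> omega
      · have := hxy v hxv
        simp only [sqcup, singl, if_neg hv, this]
        split_ifs <;> omega
  rw [hcap, hcup] at key
  unfold marg
  linarith

/-- along an LAA run, for every `0 ≤ j ≤ t` and every `k`-set `o`,
`f(o) − f(o^j) ≤ 2 f(x^j)`, where `o^j = (o ⊔ x^j) ⊔ x^j`. -/
theorem stmt0 {V : Type*} [Fintype V] [DecidableEq V]
    (k : ℕ) (hk : 2 ≤ k)
    (f : (V → ℕ) → ℝ)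
    (hsub : KSubmodular k f)
    (hnn : ∀ x : V → ℕ, IsKSet k x → 0 ≤ f x)
    (hf0 : f (fun _ => 0) = 0)
    (c : V → ℝ) (hc : ∀ e, 0 < c e) (B : ℝ) (hB : 0 < B)
    (t : ℕ) (e : ℕ → V) (pos : ℕ → ℕ)
    (hdist : ∀ j₁ j₂, j₁ < t → j₂ < t → e j₁ = e j₂ → j₁ = j₂)
    (hposk : ∀ j < t, 1 ≤ pos j ∧ pos j ≤ k)
    (x : ℕ → (V → ℕ))
    (hx0 : x 0 = fun _ => 0)
    (hxsucc : ∀ j < t, x (j + 1) = sqcup (x j) (singl (e j) (pos j)))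
    (hbest : ∀ j < t, ∀ l, 1 ≤ l → l ≤ k →
      f (sqcup (x j) (singl (e j) l)) ≤ f (sqcup (x j) (singl (e j) (pos j))))
    (hgain : ∀ j < t, c (e j) * f (x j) / B ≤ marg f (e j) (pos j) (x j))
    (hlight : ∀ j < t, c (e j) ≤ B / 2)
    (o : V → ℕ) (ho : IsKSet k o) :
    ∀ j ≤ t, f o - f (sqcup (sqcup o (x j)) (x j)) ≤ 2 * f (x j) := by
  -- every x j is a k-set
  have hxk : ∀ j ≤ t, IsKSet k (x j) := by
    intro j
    induction j with
    | zero => intro _ v; rw [hx0]; exact Nat.zero_le k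
    | succ j ih =>
      intro hj
      have hjt : j < t := hj
      rw [hxsucc j hjt]
      exact isKSet_sqcup (ih (le_of_lt hjt)) (isKSet_singl _ (hposk j hjt).2)
  -- support of x j
  have hsupp : ∀ j ≤ t, ∀ v, (∀ m, m < j → e m ≠ v) → x j v = 0 := by
    intro j
    induction j with
    | zero => intro _ v _; rw [hx0]
    | succ j ih =>
      intro hj v hv
      have hjt : j < t := hj
      rw [hxsucc j hjt]
      have h1 : x j v = 0 := ih (le_of_lt hjt) v (fun m hm => hv m (Nat.lt_succ_of_lt hm))
      have h2 : v ≠ e j := fun h => hv j (Nat.lt_succ_self j) h.symm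
      simp only [sqcup, singl, h1, if_neg h2, if_true]
  have hxe : ∀ j < t, x j (e j) = 0 := by
    intro j hj
    apply hsupp j (le_of_lt hj)
    intro m hm heq
    exact absurd (hdist m j (lt_trans hm hj) hj heq) (Nat.ne_of_lt hm)
  -- simplified form of o^j
  have hoj : ∀ z : V → ℕ, sqcup (sqcup o z) z = fun v => if z v = 0 then o v else z v := by
    intro z
    funext v
    simp only [sqcup]
    split_ifs <;> omega
  intro j
  induction j with
  | zero =>
    intro _
    rw [hoj]
    have h1 : (fun v => if x 0 v = 0 then o v else x 0 v) = o := by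
      funext v
      have : x 0 v = 0 := by rw [hx0]
      simp [this]
    have h2 : f (x 0) = 0 := by rw [hx0, hf0]
    rw [h1, h2]
    linarith
  | succ j ih =>
    intro hj1
    have hjt : j < t := hj1
    have ihj := ih (le_of_lt hjt)
    rw [hoj] at ihj ⊢
    have hxj : IsKSet k (x j) := hxk j (le_of_lt hjt)
    have hea : x j (e j) = 0 := hxe j hjt
    have hik1 : 1 ≤ pos j := (hposk j hjt).1
    have hikk : pos j ≤ k := (hposk j hjt).2
    have hpi : pos j ≠ 0 := by omega
    -- value of x (j+1)
    have hx1v : ∀ v, x (j+1) v = if v = e j then pos j else x j v := by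
      intro v
      rw [hxsucc j hjt]
      by_cases hv : v = e j
      · subst hv; simp only [sqcup, singl, if_pos rfl, hea, if_true]
      · simp only [sqcup, singl, if_neg hv]
        split_ifs <;> omega
    -- the marginal at x j equals the increment and is nonnegative
    have hstep : marg f (e j) (pos j) (x j) = f (x (j+1)) - f (x j) := by
      unfold marg; rw [hxsucc j hjt]
    have hmnn : 0 ≤ marg f (e j) (pos j) (x j) := by
      refine le_trans ?_ (hgain j hjt)
      apply div_nonneg _ hB.le
      exact mul_nonneg (hc _).le (hnn _ hxj)
    have hbnd : ∀ l, 1 ≤ l → l ≤ k → marg f (e j) l (x j) ≤ marg f (e j) (pos j) (x j) := by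
      intro l hl1 hlk
      unfold marg
      have := hbest j hjt l hl1 hlk
      linarith
    -- the "shadow" solutions
    set oj : V → ℕ := fun v => if x j v = 0 then o v else x j v with hojdef
    set oj1 : V → ℕ := fun v => if x (j+1) v = 0 then o v else x (j+1) v with hoj1def
    have hojk : IsKSet k oj := by
      intro v; rw [hojdef]; dsimp only; split_ifs; exacts [ho v, hxj v]
    have hklexoj : KLE (x j) oj := by
      intro v hv; rw [hojdef]; dsimp only; rw [if_neg hv]
    have hoja : oj (e j) = o (e j) := by rw [hojdef]; dsimp only; rw [if_pos hea]
    have hoj1v : ∀ v, oj1 v = if v = e j then pos j else oj v := by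
      intro v
      rw [hoj1def, hojdef]
      dsimp only
      rw [hx1v v]
      by_cases hv : v = e j
      · simp [hv, hpi]
      · simp [hv]
    -- the key per-step inequality
    have hkey : f oj - f oj1 ≤ 2 * marg f (e j) (pos j) (x j) := by
      by_cases hoa : o (e j) = 0
      · -- case A: e j not selected by o
        have hoja0 : oj (e j) = 0 := by rw [hoja, hoa]
        have h1 : oj1 = sqcup oj (singl (e j) (pos j)) := by
          funext v
          rw [hoj1v v]
          by_cases hv : v = e j
          · subst hv; simp only [sqcup, singl, if_pos rfl, hoja0, if_true]
          · simp only [sqcup, singl, if_neg hv]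
            split_ifs <;> omega
        -- pick an alternative position l ≠ pos j
        set l : ℕ := if pos j = 1 then 2 else 1 with hldef
        have hl1 : 1 ≤ l := by rw [hldef]; split_ifs <;> omega
        have hlk : l ≤ k := by rw [hldef]; split_ifs <;> omega
        have hli : pos j ≠ l := by rw [hldef]; split_ifs <;> omega
        have hpm := pairwise_mono hsub hojk hoja0 hik1 hikk hl1 hlk hli
        have horth := orthant hsub hxj hojk hklexoj hoja0 hl1 hlk
        have hb := hbnd l hl1 hlk
        have : f oj - f oj1 = -(marg f (e j) (pos j) oj) := by
          rw [h1]; unfold marg; ring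
        rw [this]
        linarith
      · -- case B: o (e j) = l₀ ≠ 0
        set l₀ : ℕ := o (e j) with hl0def
        have hl01 : 1 ≤ l₀ := by omega
        have hl0k : l₀ ≤ k := ho (e j)
        by_cases hl0i : l₀ = pos j
        · -- same position: oj1 = oj
          have h1 : oj1 = oj := by
            funext v
            rw [hoj1v v]
            by_cases hv : v = e j
            · subst hv; rw [if_pos rfl, hoja]; omega
            · rw [if_neg hv]
          rw [h1]
          linarith
        · -- different position
          set z : V → ℕ := fun v => if v = e j then 0 else oj v with hzdef
          have hza : z (e j) = 0 := by rw [hzdef]; dsimp only; rw [if_pos rfl]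
          have hzk : IsKSet k z := by
            intro v; rw [hzdef]; dsimp only; split_ifs
            · exact Nat.zero_le k
            · exact hojk v
          have hklexz : KLE (x j) z := by
            intro v hv
            have hv' : v ≠ e j := fun h => hv (h ▸ hea)
            rw [hzdef]; dsimp only; rw [if_neg hv']
            exact hklexoj v hv
          have h1 : oj = sqcup z (singl (e j) l₀) := by
            funext v
            by_cases hv : v = e j
            · subst hv
              simp only [sqcup, singl, if_pos rfl, hza, if_true]
              rw [hoja]
            · simp only [sqcup, singl, if_neg hv, hzdef]
              split_ifs <;> omega
          have h2 : oj1 = sqcup z (singl (e j) (pos j)) := by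
            funext v
            rw [hoj1v v]
            by_cases hv : v = e j
            · subst hv
              simp only [sqcup, singl, if_pos rfl, hza, if_true]
            · simp only [sqcup, singl, if_neg hv, hzdef]
              split_ifs <;> omega
          have hpm := pairwise_mono hsub hzk hza hik1 hikk hl01 hl0k (fun h => hl0i h.symm)
          have horth := orthant hsub hxj hzk hklexz hza hl01 hl0k
          have hb := hbnd l₀ hl01 hl0k
          have hdiff : f oj - f oj1 = marg f (e j) l₀ z - marg f (e j) (pos j) z := by
            rw [h1, h2]; unfold marg; ring
          rw [hdiff]
          linarith
    -- combine with induction hypothesis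
    linarith [hkey, ihj, hstep]
end

section
/- Let f be a nonnegative k-submodular function with f(0) = 0 and let (e_1,i_1),…,(e_t,i_t) be an LAA run with c(x^t) > B. Let T ∈ {0,…,t} be such that c(x_T) ≤ B and c(x_T) ≥ c(x_j) for every j ∈ {0,…,t} with c(x_j) ≤ B, and set x' = x_T. Then f(x') ≥ f(x^t)/3. -/
/-- Auxiliary: cost of a pointwise update at a fresh element. -/
lemma cost_update_aux {V : Type*} [Fintype V] [DecidableEq V] (c : V → ℝ)
    (y : V → ℕ) (v : V) (n : ℕ) (hy : y v = 0) (hn : n ≠ 0) :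
    cost c (Function.update y v n) = cost c y + c v := by
  unfold cost
  have hset : Finset.univ.filter (fun w => Function.update y v n w ≠ 0)
      = insert v (Finset.univ.filter (fun w => y w ≠ 0)) := by
    ext w
    by_cases h : w = v
    · subst h; simp [Function.update, hn]
    · simp [Function.update, h]
  rw [hset, Finset.sum_insert (by simp [hy])]
  ring

/-- if the LAA run exceeds the budget, the maximal-cost feasible
suffix `x' = x_T` satisfies `f(x') ≥ f(x^t)/3`. -/
theorem stmt1 {V : Type*} [Fintype V] [DecidableEq V]
    (k : ℕ) (hk : 2 ≤ k)
    (f : (V → ℕ) → ℝ)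
    (hsub : KSubmodular k f)
    (hnn : ∀ x : V → ℕ, IsKSet k x → 0 ≤ f x)
    (hf0 : f (fun _ => 0) = 0)
    (c : V → ℝ) (hc : ∀ e, 0 < c e) (B : ℝ) (hB : 0 < B)
    (t : ℕ) (e : ℕ → V) (pos : ℕ → ℕ)
    (hdist : ∀ j₁ j₂, j₁ < t → j₂ < t → e j₁ = e j₂ → j₁ = j₂)
    (hposk : ∀ j < t, 1 ≤ pos j ∧ pos j ≤ k)
    (x : ℕ → (V → ℕ))
    (hx0 : x 0 = fun _ => 0)
    (hxsucc : ∀ j < t, x (j + 1) = sqcup (x j) (singl (e j) (pos j)))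
    (hbest : ∀ j < t, ∀ l, 1 ≤ l → l ≤ k →
      f (sqcup (x j) (singl (e j) l)) ≤ f (sqcup (x j) (singl (e j) (pos j))))
    (hgain : ∀ j < t, c (e j) * f (x j) / B ≤ marg f (e j) (pos j) (x j))
    (hlight : ∀ j < t, c (e j) ≤ B / 2)
    (hover : B < cost c (x t))
    (xs : ℕ → (V → ℕ))
    (hxs0 : xs 0 = fun _ => 0)
    (hxssucc : ∀ j < t, xs (j + 1) = sqcup (xs j) (singl (e (t - 1 - j)) (pos (t - 1 - j))))
    (T : ℕ) (hTt : T ≤ t) (hTB : cost c (xs T) ≤ B)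
    (hTmax : ∀ j ≤ t, cost c (xs j) ≤ B → cost c (xs j) ≤ cost c (xs T))
    : f (x t) / 3 ≤ f (xs T) := by
  classical
  set m : ℕ := t - T with hm
  have hmt : m ≤ t := Nat.sub_le t T
  have hpos0 : ∀ j < t, pos j ≠ 0 := fun j hj => by
    have := (hposk j hj).1; omega
  -- characterization of x j
  have hxchar : ∀ j ≤ t, (∀ i < j, x j (e i) = pos i) ∧
      (∀ v, (∀ i < j, v ≠ e i) → x j v = 0) := by
    intro j hj
    induction j with
    | zero =>
      constructor
      · intro i hi; omega
      · intro v _; rw [hx0]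
    | succ n ih =>
      have hnt : n < t := by omega
      obtain ⟨h1, h2⟩ := ih (by omega)
      have hxn0 : x n (e n) = 0 := by
        apply h2
        intro i hi hne
        have := hdist n i hnt (by omega) hne
        omega
      rw [hxsucc n hnt]
      constructor
      · intro i hi
        by_cases hie : i = n
        · subst hie
          simp [sqcup, singl, hxn0]
        · have hin : i < n := by omega
          have hne : e i ≠ e n := by
            intro h
            exact hie (hdist i n (by omega) hnt h)
          have hv : x n (e i) = pos i := h1 i hin
          simp [sqcup, singl, hne, hv, hpos0 i (by omega)]
      · intro v hv
        have hvn : v ≠ e n := hv n (by omega)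
        have h0 : x n v = 0 := h2 v (fun i hi => hv i (by omega))
        simp [sqcup, singl, hvn, h0]
  -- characterization of xs j
  have hxschar : ∀ j ≤ t, (∀ i, t - j ≤ i → i < t → xs j (e i) = pos i) ∧
      (∀ v, (∀ i, t - j ≤ i → i < t → v ≠ e i) → xs j v = 0) := by
    intro j hj
    induction j with
    | zero =>
      constructor
      · intro i hi1 hi2; omega
      · intro v _; rw [hxs0]
    | succ n ih =>
      have hnt : n < t := by omega
      obtain ⟨h1, h2⟩ := ih (by omega)
      have hw : t - 1 - n < t := by omega
      have hxn0 : xs n (e (t - 1 - n)) = 0 := by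
        apply h2
        intro i hi1 hi2 hne
        have := hdist (t - 1 - n) i hw hi2 hne
        omega
      rw [hxssucc n hnt]
      constructor
      · intro i hi1 hi2
        by_cases hie : i = t - 1 - n
        · subst hie
          simp [sqcup, singl, hxn0]
        · have hin : t - n ≤ i := by omega
          have hne : e i ≠ e (t - 1 - n) := by
            intro h
            exact hie (hdist i (t - 1 - n) hi2 hw h)
          have hv : xs n (e i) = pos i := h1 i hin hi2
          simp [sqcup, singl, hne, hv, hpos0 i hi2]
      · intro v hv
        have hvn : v ≠ e (t - 1 - n) := hv (t - 1 - n) (by omega) hw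
        have h0 : xs n v = 0 := h2 v (fun i hi1 hi2 => hv i (by omega) hi2)
        simp [sqcup, singl, hvn, h0]
  -- k-set property
  have hxk : ∀ j ≤ t, IsKSet k (x j) := by
    intro j hj v
    by_cases h : ∀ i < j, v ≠ e i
    · rw [(hxchar j hj).2 v h]; omega
    · push_neg at h
      obtain ⟨i, hi, rfl⟩ := h
      rw [(hxchar j hj).1 i hi]
      exact (hposk i (by omega)).2
  have hxsk : ∀ j ≤ t, IsKSet k (xs j) := by
    intro j hj v
    by_cases h : ∀ i, t - j ≤ i → i < t → v ≠ e i
    · rw [(hxschar j hj).2 v h]; omega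
    · push_neg at h
      obtain ⟨i, hi1, hi2, rfl⟩ := h
      rw [(hxschar j hj).1 i hi1 hi2]
      exact (hposk i hi2).2
  -- cost recurrence for xs
  have hcostsucc : ∀ j < t, cost c (xs (j + 1)) = cost c (xs j) + c (e (t - 1 - j)) := by
    intro j hj
    have hw : t - 1 - j < t := by omega
    have hxn0 : xs j (e (t - 1 - j)) = 0 := by
      apply (hxschar j (by omega)).2
      intro i hi1 hi2 hne
      have := hdist (t - 1 - j) i hw hi2 hne
      omega
    have hupd : xs (j + 1) = Function.update (xs j) (e (t - 1 - j)) (pos (t - 1 - j)) := by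
      rw [hxssucc j hj]
      funext v
      by_cases hv : v = e (t - 1 - j)
      · subst hv
        simp [sqcup, singl, hxn0, Function.update]
      · simp only [sqcup, singl, if_neg hv, Function.update, dif_neg hv]
        by_cases h : xs j v = 0 <;> simp [h]
    rw [hupd, cost_update_aux c _ _ _ hxn0 (hpos0 _ hw)]
  -- cost formula
  have hcost : ∀ j ≤ t, cost c (xs j) = ∑ i ∈ Finset.Ico (t - j) t, c (e i) := by
    intro j hj
    induction j with
    | zero => simp [cost, hxs0]
    | succ n ih =>
      have hnt : n < t := by omega
      rw [hcostsucc n hnt, ih (by omega)]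
      have hlt : t - (n + 1) < t := by omega
      rw [Finset.sum_eq_sum_Ico_succ_bot hlt]
      have heq1 : t - (n + 1) + 1 = t - n := by omega
      have heq2 : t - (n + 1) = t - 1 - n := by omega
      rw [heq1, heq2]
      ring
  -- x t = xs t
  have hxt_eq : x t = xs t := by
    funext v
    by_cases h : ∀ i < t, v ≠ e i
    · rw [(hxchar t le_rfl).2 v h, (hxschar t le_rfl).2 v (fun i _ hi2 => h i hi2)]
    · push_neg at h
      obtain ⟨i, hi, rfl⟩ := h
      rw [(hxchar t le_rfl).1 i hi, (hxschar t le_rfl).1 i (by omega) hi]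
  -- T < t
  have hTlt : T < t := by
    rcases lt_or_eq_of_le hTt with h | h
    · exact h
    · exfalso
      rw [h] at hTB
      rw [hxt_eq] at hover
      linarith
  -- cost xs T > B / 2
  have hShalf : B / 2 < cost c (xs T) := by
    have hrec := hcostsucc T hTlt
    have hnotfeas : ¬ (cost c (xs (T + 1)) ≤ B) := by
      intro hfeas
      have h1 := hTmax (T + 1) (by omega) hfeas
      have h2 := hc (e (t - 1 - T))
      linarith
    push_neg at hnotfeas
    have := hlight (t - 1 - T) (by omega)
    linarith
  -- marginal gains are the increments
  have hstep : ∀ j < t, c (e j) * f (x j) ≤ (f (x (j + 1)) - f (x j)) * B := by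
    intro j hj
    have hg := hgain j hj
    rw [div_le_iff₀ hB] at hg
    have hmarg : marg f (e j) (pos j) (x j) = f (x (j + 1)) - f (x j) := by
      unfold marg
      rw [hxsucc j hj]
    rw [hmarg] at hg
    exact hg
  -- telescoping bound
  have htele : ∀ j ≤ t, m ≤ j →
      f (x m) * B + f (x m) * (∑ i ∈ Finset.Ico m j, c (e i)) ≤ f (x j) * B := by
    intro j
    induction j with
    | zero =>
      intro _ hmj
      have hm0 : m = 0 := by omega
      rw [hm0]
      simp
    | succ n ih =>
      intro hn1 hmj
      by_cases hmn : m = n + 1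
      · rw [hmn]; simp
      · have hmn' : m ≤ n := by omega
        have hnt : n < t := by omega
        have IH := ih (by omega) hmn'
        have hS0 : (0:ℝ) ≤ ∑ i ∈ Finset.Ico m n, c (e i) :=
          Finset.sum_nonneg (fun i _ => (hc (e i)).le)
        have ha : 0 ≤ f (x m) := hnn _ (hxk m hmt)
        have hfn : f (x m) ≤ f (x n) := by nlinarith
        have hcn : 0 < c (e n) := hc (e n)
        have hac : f (x m) * c (e n) ≤ f (x n) * c (e n) :=
          mul_le_mul_of_nonneg_right hfn hcn.le
        have hst := hstep n hnt
        rw [Finset.sum_Ico_succ_top hmn']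
        nlinarith
  -- subadditivity: f (x t) ≤ f (x m) + f (xs T)
  have hsplit : f (x t) ≤ f (x m) + f (xs T) := by
    have key : ∀ v, sqcap (x m) (xs T) v = 0 ∧ sqcup (x m) (xs T) v = x t v := by
      intro v
      by_cases h1 : ∀ i < m, v ≠ e i
      · have hxm0 : x m v = 0 := (hxchar m hmt).2 v h1
        by_cases h2 : ∀ i, t - T ≤ i → i < t → v ≠ e i
        · have hxs0' : xs T v = 0 := (hxschar T hTt).2 v h2
          have hxt0 : x t v = 0 := by
            apply (hxchar t le_rfl).2
            intro i hi
            by_cases him : i < m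
            · exact h1 i him
            · exact h2 i (by omega) hi
          constructor
          · simp [sqcap, hxm0, hxs0']
          · simp [sqcup, hxm0, hxs0', hxt0]
        · push_neg at h2
          obtain ⟨i, hi1, hi2, rfl⟩ := h2
          have hxs : xs T (e i) = pos i := (hxschar T hTt).1 i hi1 hi2
          have hxt : x t (e i) = pos i := (hxchar t le_rfl).1 i hi2
          have hp : pos i ≠ 0 := hpos0 i hi2
          constructor
          · simp only [sqcap, hxm0, hxs]
            split
            · omega
            · rfl
          · simp [sqcup, hxm0, hxs, hxt]
      · push_neg at h1
        obtain ⟨i, hi, rfl⟩ := h1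
        have hxm : x m (e i) = pos i := (hxchar m hmt).1 i hi
        have hxs : xs T (e i) = 0 := by
          apply (hxschar T hTt).2
          intro i' hi1 hi2 hne
          have := hdist i i' (by omega) hi2 hne
          omega
        have hxt : x t (e i) = pos i := (hxchar t le_rfl).1 i (by omega)
        have hp : pos i ≠ 0 := hpos0 i (by omega)
        constructor
        · simp only [sqcap, hxm, hxs]
          split
          · omega
          · rfl
        · simp [sqcup, hxm, hxs, hxt, hp]
    have hcap : sqcap (x m) (xs T) = (fun _ => 0) := funext fun v => (key v).1
    have hcup : sqcup (x m) (xs T) = x t := funext fun v => (key v).2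
    have hss := hsub (x m) (xs T) (hxk m hmt) (hxsk T hTt)
    rw [hcap, hcup, hf0] at hss
    linarith
  -- conclude
  have hfin : f (x m) * B + f (x m) * cost c (xs T) ≤ f (x t) * B := by
    have htt := htele t le_rfl hmt
    rw [hcost T hTt]
    exact htt
  have ha : 0 ≤ f (x m) := hnn _ (hxk m hmt)
  nlinarith [mul_le_mul_of_nonneg_left hShalf.le ha]
end

section
/- (One-step exchange inequality.) Let f be a nonnegative k-submodular function with f(0) = 0. Let x and y be k-sets with x ⊑ y, let e ∈ V with e ∉ supp(x), and let i ∈ {1,…,k} be such that f(x ⊔ (e,i)) ≥ f(x ⊔ (e,l)) for every l ∈ {1,…,k} and f(x ⊔ (e,i)) ≥ f(x). Let y' be the k-set with y'(e) = i and y'(e') = y(e') for every e' ≠ e. Then f(y) − f(y') ≤ 2·(f(x ⊔ (e,i)) − f(x)). -/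
lemma capA {V : Type*} [DecidableEq V] (x y : V → ℕ) (e : V) (m : ℕ)
    (hxy : KLE x y) (hxe : x e = 0) (hye : y e = 0) (hm : m ≠ 0) :
    sqcap y (sqcup x (singl e m)) = x := by
  funext e'
  by_cases h : e' = e
  · subst h; simp [sqcap, sqcup, singl, hxe, hye, hm]
  · simp only [sqcap, sqcup, singl, if_neg h]
    by_cases hx0 : x e' = 0
    · simp [hx0]
    · simp [hx0, hxy e' hx0]

lemma cupA {V : Type*} [DecidableEq V] (x y : V → ℕ) (e : V) (m : ℕ)
    (hxy : KLE x y) (hxe : x e = 0) (hye : y e = 0) (hm : m ≠ 0) :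
    sqcup y (sqcup x (singl e m)) = Function.update y e m := by
  funext e'
  by_cases h : e' = e
  · subst h; simp [sqcup, singl, hxe, hye, hm]
  · simp only [sqcup, singl, if_neg h, Function.update, dif_neg h]
    by_cases hy0 : y e' = 0
    · have hx0 : x e' = 0 := by
        by_contra hx0; rw [hxy e' hx0] at hy0; exact hx0 hy0
      simp [hy0, hx0]
    · by_cases hx0 : x e' = 0
      · simp [hy0, hx0]
      · simp [hy0, hx0, hxy e' hx0]

/-- For `y e ≠ 0`, `y e ≠ m`, the pair `(y, x ⊔ (e,m))` meets at `x` and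
joins at `y` with `e` unselected. -/
lemma capB {V : Type*} [DecidableEq V] (x y : V → ℕ) (e : V) (m : ℕ)
    (hxy : KLE x y) (hxe : x e = 0) (hye : y e ≠ m) :
    sqcap y (sqcup x (singl e m)) = x := by
  funext e'
  by_cases h : e' = e
  · subst h; simp [sqcap, sqcup, singl, hxe, hye]
  · simp only [sqcap, sqcup, singl, if_neg h]
    by_cases hx0 : x e' = 0
    · simp [hx0]
    · simp [hx0, hxy e' hx0]

lemma cupB {V : Type*} [DecidableEq V] (x y : V → ℕ) (e : V) (m : ℕ)
    (hxy : KLE x y) (hxe : x e = 0) (hye0 : y e ≠ 0) (hye : y e ≠ m)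
    (hm : m ≠ 0) :
    sqcup y (sqcup x (singl e m)) = Function.update y e 0 := by
  funext e'
  by_cases h : e' = e
  · subst h; simp [sqcup, singl, hxe, hye0, hye, hm]
  · simp only [sqcup, singl, if_neg h, Function.update, dif_neg h]
    by_cases hy0 : y e' = 0
    · have hx0 : x e' = 0 := by
        by_contra hx0; rw [hxy e' hx0] at hy0; exact hx0 hy0
      simp [hy0, hx0]
    · by_cases hx0 : x e' = 0
      · simp [hy0, hx0]
      · simp [hy0, hx0, hxy e' hx0]

lemma kset_cup_singl {V : Type*} [DecidableEq V] (k : ℕ) (x : V → ℕ) (e : V)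
    (m : ℕ) (hx : IsKSet k x) (hm : m ≤ k) : IsKSet k (sqcup x (singl e m)) := by
  intro e'
  have := hx e'
  simp only [sqcup, singl]
  split_ifs <;> omega

lemma kset_update {V : Type*} [DecidableEq V] (k : ℕ) (y : V → ℕ) (e : V)
    (m : ℕ) (hy : IsKSet k y) (hm : m ≤ k) : IsKSet k (Function.update y e m) := by
  intro e'
  have := hy e'
  rw [Function.update_apply]
  split <;> omega

/-- Pairwise monotonicity, a consequence of `k`-submodularity. -/
lemma pairwise_mono_s6 {V : Type*} [DecidableEq V] (k : ℕ) (f : (V → ℕ) → ℝ)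
    (hsub : KSubmodular k f) (w : V → ℕ) (hw : IsKSet k w)
    (e : V) (hwe : w e = 0) (a b : ℕ) (ha0 : a ≠ 0) (hb0 : b ≠ 0)
    (hab : a ≠ b) (hak : a ≤ k) (hbk : b ≤ k) :
    f (Function.update w e a) + f (Function.update w e b) ≥ 2 * f w := by
  have hsm := hsub (Function.update w e a) (Function.update w e b)
    (kset_update k w e a hw hak) (kset_update k w e b hw hbk)
  have hcap : sqcap (Function.update w e a) (Function.update w e b) = w := by
    funext e'
    by_cases h : e' = e
    · subst h; simp [sqcap, hab, hwe]
    · simp [sqcap, Function.update_of_ne h]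
  have hcup : sqcup (Function.update w e a) (Function.update w e b) = w := by
    funext e'
    by_cases h : e' = e
    · subst h; simp [sqcup, ha0, hb0, hab, hwe]
    · simp only [sqcup, Function.update_of_ne h]
      by_cases hw0 : w e' = 0 <;> simp [hw0]
  rw [hcap, hcup] at hsm
  linarith

/-- one-step exchange inequality: for `x ⊑ y`, `e ∉ supp(x)` and
a best nonnegative position `i` for `e` at `x`, replacing the position of `e`
in `y` by `i` loses at most twice the gain at `x`. -/
theorem stmt6 {V : Type*} [Fintype V] [DecidableEq V]
    (k : ℕ) (hk : 2 ≤ k)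
    (f : (V → ℕ) → ℝ)
    (hsub : KSubmodular k f)
    (hnn : ∀ x : V → ℕ, IsKSet k x → 0 ≤ f x)
    (hf0 : f (fun _ => 0) = 0)
    (x y : V → ℕ) (hx : IsKSet k x) (hy : IsKSet k y) (hxy : KLE x y)
    (e : V) (he : x e = 0) (i : ℕ) (hi1 : 1 ≤ i) (hi2 : i ≤ k)
    (hbest : ∀ l, 1 ≤ l → l ≤ k → f (sqcup x (singl e l)) ≤ f (sqcup x (singl e i)))
    (hgain : f x ≤ f (sqcup x (singl e i))) :
    f y - f (Function.update y e i) ≤ 2 * (f (sqcup x (singl e i)) - f x) := by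
  have hi0 : i ≠ 0 := by omega
  have hzi : IsKSet k (sqcup x (singl e i)) := kset_cup_singl k x e i hx hi2
  by_cases h0 : y e = i
  · rw [show Function.update y e i = y from h0 ▸ Function.update_eq_self e y]
    linarith
  by_cases h1 : y e = 0
  · -- case y e = 0 : use a second color l ≠ i
    set l : ℕ := if i = 1 then 2 else 1 with hl
    have hl0 : l ≠ 0 := by rw [hl]; split <;> omega
    have hlk : l ≤ k := by rw [hl]; split <;> omega
    have hli : l ≠ i := by rw [hl]; split <;> omega
    have pm := pairwise_mono_s6 k f hsub y hy e h1 i l hi0 hl0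
      (fun h => hli h.symm) hi2 hlk
    have orth := hsub y (sqcup x (singl e l)) hy (kset_cup_singl k x e l hx hlk)
    rw [capA x y e l hxy he h1 hl0, cupA x y e l hxy he h1 hl0] at orth
    have hbl := hbest l (by omega) hlk
    linarith
  · -- case y e = j with j ≠ 0, j ≠ i
    set j := y e with hj
    set y0 := Function.update y e 0 with hy0def
    have hy0set : IsKSet k y0 := kset_update k y e 0 hy (by omega)
    have h0e : y0 e = 0 := Function.update_self e 0 y
    have hupd_j : Function.update y0 e j = y := by
      rw [hy0def, Function.update_idem, hj, Function.update_eq_self]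
    have hupd_i : Function.update y0 e i = Function.update y e i := by
      rw [hy0def, Function.update_idem]
    have hxy0 : KLE x y0 := by
      intro e' h
      have hne : e' ≠ e := fun hc => h (hc ▸ he)
      rw [hy0def, Function.update_of_ne hne]
      exact hxy e' h
    have sm1 := hsub y0 (sqcup x (singl e j)) hy0set
      (kset_cup_singl k x e j hx (hj ▸ hy e))
    rw [capA x y0 e j hxy0 he h0e h1, cupA x y0 e j hxy0 he h0e h1, hupd_j] at sm1
    have hbj := hbest j (by omega) (hj ▸ hy e)
    have pm := pairwise_mono_s6 k f hsub y0 hy0set e h0e i j hi0 h1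
      (fun h => h0 h.symm) hi2 (hj ▸ hy e)
    rw [hupd_j, hupd_i] at pm
    linarith
end

section
/- (Budget-blocked element case.) Let f be a nonnegative k-submodular function with f(0) = 0 and V ≠ ∅, and let s = s^n be the output of an RLA run with threshold τ ≥ 0. Suppose there exist e* ∈ V \ supp(s) and p ∈ {1,…,k} such that Δ_{(e*,p)}f(s^{<e*}) ≥ c(e*)·τ and c(s^{<e*}) + c(e*) > B. Then max{f(s), max_{e ∈ V, i ∈ {1,…,k}} f((e,i))} ≥ B·τ/2. -/
lemma sqcup_singl_ne {V : Type*} [DecidableEq V] (x : V → ℕ) (e : V) (i : ℕ)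
    {e' : V} (h : e' ≠ e) : sqcup x (singl e i) e' = x e' := by
  by_cases hx : x e' = 0 <;> simp [sqcup, singl, h, hx]

lemma sqcup_singl_self {V : Type*} [DecidableEq V] (x : V → ℕ) (e : V) (i : ℕ)
    (hx : x e = 0) : sqcup x (singl e i) e = i := by
  simp [sqcup, singl, hx]

lemma cost_sqcup_singl {V : Type*} [Fintype V] [DecidableEq V] (c : V → ℝ)
    (x : V → ℕ) (e : V) (i : ℕ) (hx : x e = 0) (hi : i ≠ 0) :
    cost c (sqcup x (singl e i)) = cost c x + c e := by
  unfold cost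
  have hset : Finset.univ.filter (fun e' => sqcup x (singl e i) e' ≠ 0)
      = insert e (Finset.univ.filter (fun e' => x e' ≠ 0)) := by
    ext v
    by_cases hv : v = e
    · rw [hv]
      simp [sqcup_singl_self x e i hx, hi]
    · simp [sqcup_singl_ne x e i hv, hv]
  rw [hset, Finset.sum_insert (by simp [hx])]
  ring

/-- budget-blocked element case: if some unselected element
passes the threshold but is blocked by the budget during an RLA run, then
`max {f(s), max_{e,i} f((e,i))} ≥ B·τ/2`. -/
theorem stmt9 {V : Type*} [Fintype V] [DecidableEq V] [Nonempty V]
    (k : ℕ) (hk : 2 ≤ k)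
    (f : (V → ℕ) → ℝ)
    (hsub : KSubmodular k f)
    (hnn : ∀ x : V → ℕ, IsKSet k x → 0 ≤ f x)
    (hf0 : f (fun _ => 0) = 0)
    (c : V → ℝ) (hc : ∀ e, 0 < c e) (B : ℝ) (hB : 0 < B)
    (τ : ℝ) (hτ : 0 ≤ τ)
    (n : ℕ) (e : ℕ → V)
    (hinj : ∀ j₁ j₂, j₁ < n → j₂ < n → e j₁ = e j₂ → j₁ = j₂)
    (hsurj : ∀ v : V, ∃ j, j < n ∧ e j = v)
    (s : ℕ → (V → ℕ)) (pos : ℕ → ℕ)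
    (hs0 : s 0 = fun _ => 0)
    (hposk : ∀ j < n, 1 ≤ pos j ∧ pos j ≤ k)
    (hbest : ∀ j < n, ∀ l, 1 ≤ l → l ≤ k →
      marg f (e j) l (s j) ≤ marg f (e j) (pos j) (s j))
    (hstep : ∀ j < n,
      ((cost c (s j) + c (e j) ≤ B ∧ c (e j) * τ ≤ marg f (e j) (pos j) (s j)) →
        s (j + 1) = sqcup (s j) (singl (e j) (pos j))) ∧
      (¬ (cost c (s j) + c (e j) ≤ B ∧ c (e j) * τ ≤ marg f (e j) (pos j) (s j)) →
        s (j + 1) = s j))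
    (hex : ∃ j, j < n ∧ s n (e j) = 0 ∧ ∃ p, 1 ≤ p ∧ p ≤ k ∧
      c (e j) * τ ≤ marg f (e j) p (s j) ∧ B < cost c (s j) + c (e j)) :
    B * τ / 2 ≤ f (s n) ∨
      ∃ (e' : V) (i : ℕ), 1 ≤ i ∧ i ≤ k ∧ B * τ / 2 ≤ f (singl e' i) := by
  obtain ⟨j, hjn, hsnj, p, hp1, hpk, hmargp, hbudget⟩ := hex
  -- k-set property
  have hks : ∀ m, m ≤ n → IsKSet k (s m) := by
    intro m
    induction m with
    | zero => intro _ v; rw [hs0]; exact Nat.zero_le k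
    | succ m ih =>
      intro hm1
      have hm : m < n := hm1
      have ihm := ih (le_of_lt hm)
      obtain ⟨hacc, hrej⟩ := hstep m hm
      by_cases hcond : cost c (s m) + c (e m) ≤ B ∧
          c (e m) * τ ≤ marg f (e m) (pos m) (s m)
      · rw [hacc hcond]
        intro v
        by_cases hv : v = e m
        · rw [hv]
          have hsk := ihm (e m)
          have hpk2 := (hposk m hm).2
          by_cases h0 : s m (e m) = 0
          · rw [sqcup_singl_self _ _ _ h0]
            exact hpk2
          · simp only [sqcup, singl, eq_self_iff_true, if_true, if_neg h0]
            split
            · exact hsk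
            · split
              · exact hsk
              · exact Nat.zero_le k
        · rw [sqcup_singl_ne _ _ _ hv]
          exact ihm v
      · rw [hrej hcond]; exact ihm
  -- support lemma
  have hsupp : ∀ m, m ≤ n → ∀ v, s m v ≠ 0 → ∃ l, l < m ∧ e l = v := by
    intro m
    induction m with
    | zero => intro _ v hv; rw [hs0] at hv; exact absurd rfl hv
    | succ m ih =>
      intro hm1 v hv
      have hm : m < n := hm1
      obtain ⟨hacc, hrej⟩ := hstep m hm
      by_cases hcond : cost c (s m) + c (e m) ≤ B ∧
          c (e m) * τ ≤ marg f (e m) (pos m) (s m)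
      · rw [hacc hcond] at hv
        by_cases hveq : v = e m
        · exact ⟨m, Nat.lt_succ_self m, hveq.symm⟩
        · rw [sqcup_singl_ne _ _ _ hveq] at hv
          obtain ⟨l, hl, hle⟩ := ih (le_of_lt hm) v hv
          exact ⟨l, Nat.lt_succ_of_lt hl, hle⟩
      · rw [hrej hcond] at hv
        obtain ⟨l, hl, hle⟩ := ih (le_of_lt hm) v hv
        exact ⟨l, Nat.lt_succ_of_lt hl, hle⟩
  -- each processed element is fresh
  have hfresh : ∀ m, m < n → s m (e m) = 0 := by
    intro m hm
    by_contra h0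
    obtain ⟨l, hl, hle⟩ := hsupp m (le_of_lt hm) (e m) h0
    exact absurd (hinj l m (lt_trans hl hm) hm hle) (Nat.ne_of_lt hl)
  -- support values persist
  have hpersist : ∀ m, m < n → ∀ v, s m v ≠ 0 → s (m + 1) v = s m v := by
    intro m hm v hv
    obtain ⟨hacc, hrej⟩ := hstep m hm
    by_cases hcond : cost c (s m) + c (e m) ≤ B ∧
        c (e m) * τ ≤ marg f (e m) (pos m) (s m)
    · rw [hacc hcond]
      have hveq : v ≠ e m := by
        intro h; rw [h] at hv; exact hv (hfresh m hm)
      exact sqcup_singl_ne _ _ _ hveq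
    · rw [hrej hcond]
  have hpersist' : ∀ m', m' ≤ n → ∀ m, m ≤ m' → ∀ v, s m v ≠ 0 → s m' v = s m v := by
    intro m'
    induction m' with
    | zero =>
      intro _ m hm v _
      obtain rfl := Nat.le_zero.mp hm
      rfl
    | succ m' ih =>
      intro hm'n m hm v hv
      rcases Nat.lt_or_ge m (m' + 1) with h | h
      · have h1 := ih (le_of_lt hm'n) m (Nat.lt_succ_iff.mp h) v hv
        rw [hpersist m' hm'n v (by rw [h1]; exact hv), h1]
      · obtain rfl : m = m' + 1 := le_antisymm hm h
        rfl
  -- s j (e j) = 0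
  have hzero : s j (e j) = 0 := by
    by_contra h0
    have := hpersist' n (le_refl n) j (le_of_lt hjn) (e j) h0
    rw [hsnj] at this
    exact h0 this.symm
  -- threshold invariant
  have hinv : ∀ m, m ≤ n → τ * cost c (s m) ≤ f (s m) := by
    intro m
    induction m with
    | zero =>
      intro _
      have hc0 : cost c (s 0) = 0 := by
        unfold cost
        rw [hs0]
        simp
      rw [hc0, hs0, hf0, mul_zero]
    | succ m ih =>
      intro hm1
      have hm : m < n := hm1
      have ihm := ih (le_of_lt hm)
      obtain ⟨hacc, hrej⟩ := hstep m hm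
      by_cases hcond : cost c (s m) + c (e m) ≤ B ∧
          c (e m) * τ ≤ marg f (e m) (pos m) (s m)
      · rw [hacc hcond]
        have hpos0 : pos m ≠ 0 := by have := (hposk m hm).1; omega
        rw [cost_sqcup_singl c (s m) (e m) (pos m) (hfresh m hm) hpos0]
        have hmg := hcond.2
        unfold marg at hmg
        rw [mul_add, mul_comm τ (c (e m))]
        linarith
      · rw [hrej hcond]; exact ihm
  -- f monotone along the run
  have hmono : ∀ m, m < n → f (s m) ≤ f (s (m + 1)) := by
    intro m hm
    obtain ⟨hacc, hrej⟩ := hstep m hm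
    by_cases hcond : cost c (s m) + c (e m) ≤ B ∧
        c (e m) * τ ≤ marg f (e m) (pos m) (s m)
    · rw [hacc hcond]
      have hmg := hcond.2
      unfold marg at hmg
      nlinarith [mul_nonneg (le_of_lt (hc (e m))) hτ]
    · rw [hrej hcond]
  have hmono' : ∀ m', m' ≤ n → ∀ m, m ≤ m' → f (s m) ≤ f (s m') := by
    intro m'
    induction m' with
    | zero =>
      intro _ m hm
      obtain rfl := Nat.le_zero.mp hm
      exact le_refl _
    | succ m' ih =>
      intro hm'n m hm
      rcases Nat.lt_or_ge m (m' + 1) with h | h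
      · exact le_trans (ih (le_of_lt hm'n) m (Nat.lt_succ_iff.mp h)) (hmono m' hm'n)
      · obtain rfl : m = m' + 1 := le_antisymm hm h
        exact le_refl _
  -- submodularity at (s j, singl (e j) p)
  have hsingl_ks : IsKSet k (singl (e j) p) := by
    intro v
    unfold singl
    split <;> omega
  have hcap : sqcap (s j) (singl (e j) p) = (fun _ => 0) := by
    funext v
    show sqcap (s j) (singl (e j) p) v = 0
    by_cases hv : v = e j
    · rw [hv]
      simp [sqcap, singl, hzero]
    · simp only [sqcap, singl, if_neg hv]
      split <;> simp_all
  have hsubm := hsub (s j) (singl (e j) p) (hks j (le_of_lt hjn)) hsingl_ks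
  rw [hcap, hf0] at hsubm
  have hmarg_eq : marg f (e j) p (s j) = f (sqcup (s j) (singl (e j) p)) - f (s j) := rfl
  have hsingl_ge : c (e j) * τ ≤ f (singl (e j) p) := by
    rw [hmarg_eq] at hmargp
    linarith
  -- combine
  have hfn : τ * cost c (s j) ≤ f (s n) :=
    le_trans (hinv j (le_of_lt hjn)) (hmono' n (le_refl n) j (le_of_lt hjn))
  have hBτ : B * τ ≤ f (s n) + f (singl (e j) p) := by
    have h1 : B * τ ≤ (cost c (s j) + c (e j)) * τ :=
      mul_le_mul_of_nonneg_right (le_of_lt hbudget) hτ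
    have h2 : (cost c (s j) + c (e j)) * τ = τ * cost c (s j) + c (e j) * τ := by ring
    linarith
  by_cases hcase : B * τ / 2 ≤ f (s n)
  · exact Or.inl hcase
  · exact Or.inr ⟨e j, p, hp1, hpk, by linarith⟩
end
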